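/- For all x ≥ 0 and y ≥ 0 with x + y ≤ X, one has w(x + y) ≥ w(x) · cosh(y). -/

import Mathlib

open Set

private lemma mono_aux {a b : ℝ} {f f' : ℝ → ℝ}
    (hf : ∀ t ∈ Icc a b, HasDerivWithinAt f (f' t) (Icc a b) t)
    (h0 : ∀ t ∈ Icc a b, 0 ≤ f' t) : MonotoneOn f (Icc a b) := by
  apply monotoneOn_of_hasDerivWithinAt_nonneg (convex_Icc a b)
    (fun t ht => (hf t ht).continuousWithinAt) (f' := f')
  · intro t ht
    rw [interior_Icc] at ht ⊢
    exact ((hf t (Ioo_subset_Icc_self ht)).mono Ioo_subset_Icc_self)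
  · intro t ht
    rw [interior_Icc] at ht
    exact h0 t (Ioo_subset_Icc_self ht)

/-- Convexity estimate: if `w ≥ 0`, `w'' ≥ w` on `[0,X]` and `w'(0) ≥ 0`, then
`w(x+y) ≥ w(x)·cosh(y)` for `x, y ≥ 0` with `x + y ≤ X`. -/
theorem super_additive
    (X : ℝ) (hX : 0 < X)
    (w w' w'' : ℝ → ℝ)
    (hw' : ∀ x ∈ Set.Icc (0:ℝ) X, HasDerivWithinAt w (w' x) (Set.Icc 0 X) x)
    (hw'' : ∀ x ∈ Set.Icc (0:ℝ) X, HasDerivWithinAt w' (w'' x) (Set.Icc 0 X) x)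
    (hw''cont : ContinuousOn w'' (Set.Icc 0 X))
    (hwnonneg : ∀ x ∈ Set.Icc (0:ℝ) X, 0 ≤ w x)
    (hconvex : ∀ x ∈ Set.Icc (0:ℝ) X, w x ≤ w'' x)
    (hw'0 : 0 ≤ w' 0) :
    ∀ x y : ℝ, 0 ≤ x → 0 ≤ y → x + y ≤ X →
      w x * Real.cosh y ≤ w (x + y) := by
  intro x y hx hy hxy
  have hxX : x ∈ Icc (0:ℝ) X := ⟨hx, by linarith⟩
  have hmem : ∀ t ∈ Icc (0:ℝ) y, x + t ∈ Icc (0:ℝ) X := fun t ht =>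
    ⟨by linarith [ht.1], by linarith [ht.2]⟩
  -- w' is nonnegative on [0,X]
  have hw'nonneg : ∀ z ∈ Icc (0:ℝ) X, 0 ≤ w' z := by
    intro z hz
    have hmono : MonotoneOn w' (Icc (0:ℝ) X) :=
      mono_aux hw'' (fun t ht => le_trans (hwnonneg t ht) (hconvex t ht))
    calc (0:ℝ) ≤ w' 0 := hw'0
      _ ≤ w' z := hmono ⟨le_refl 0, hX.le⟩ hz hz.1
  set s : Set ℝ := Icc (0:ℝ) y with hs
  set φ : ℝ → ℝ := fun t => w (x + t) - w x * Real.cosh t with hφdef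
  set φ' : ℝ → ℝ := fun t => w' (x + t) - w x * Real.sinh t with hφ'def
  set ψ : ℝ → ℝ := fun t => φ' t * Real.cosh t - φ t * Real.sinh t with hψdef
  have hadd : ∀ t ∈ s, HasDerivWithinAt (fun u : ℝ => x + u) 1 s t := fun t ht =>
    (hasDerivWithinAt_id t s).const_add x
  have hcomp : ∀ t ∈ s, HasDerivWithinAt (fun u => w (x + u)) (w' (x + t)) s t := by
    intro t ht
    have := HasDerivWithinAt.comp t (hw' (x + t) (hmem t ht)) (hadd t ht) hmem
    rw [mul_one] at this
    exact this
  have hcomp' : ∀ t ∈ s, HasDerivWithinAt (fun u => w' (x + u)) (w'' (x + t)) s t := by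
    intro t ht
    have := HasDerivWithinAt.comp t (hw'' (x + t) (hmem t ht)) (hadd t ht) hmem
    rw [mul_one] at this
    exact this
  have hφ : ∀ t ∈ s, HasDerivWithinAt φ (φ' t) s t := fun t ht =>
    (hcomp t ht).sub (((Real.hasDerivAt_cosh t).hasDerivWithinAt).const_mul (w x))
  have hφ' : ∀ t ∈ s, HasDerivWithinAt φ' (w'' (x + t) - w x * Real.cosh t) s t := fun t ht =>
    (hcomp' t ht).sub (((Real.hasDerivAt_sinh t).hasDerivWithinAt).const_mul (w x))
  have hψ : ∀ t ∈ s, HasDerivWithinAt ψ ((w'' (x + t) - w (x + t)) * Real.cosh t) s t := by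
    intro t ht
    have h := ((hφ' t ht).mul ((Real.hasDerivAt_cosh t).hasDerivWithinAt)).sub
      ((hφ t ht).mul ((Real.hasDerivAt_sinh t).hasDerivWithinAt))
    convert h using 1
    · rfl
    · rfl
    · rfl
    simp only [φ, φ']
    have := Real.cosh_sq_sub_sinh_sq t
    nlinarith [Real.cosh_sq_sub_sinh_sq t]
  have hψnonneg : ∀ t ∈ s, 0 ≤ ψ t := by
    intro t ht
    have hmono : MonotoneOn ψ s := mono_aux hψ (fun t ht =>
      mul_nonneg (by linarith [hconvex (x + t) (hmem t ht)]) (Real.cosh_pos t).le)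
    have h0s : (0:ℝ) ∈ s := ⟨le_refl 0, hy⟩
    have hψ0 : ψ 0 = w' x := by
      simp [hψdef, hφdef, hφ'def, Real.cosh_zero, Real.sinh_zero]
    calc (0:ℝ) ≤ ψ 0 := by rw [hψ0]; exact hw'nonneg x hxX
      _ ≤ ψ t := hmono h0s ht ht.1
  set ρ : ℝ → ℝ := fun t => φ t / Real.cosh t with hρdef
  have hρ : ∀ t ∈ s, HasDerivWithinAt ρ (ψ t / Real.cosh t ^ 2) s t := by
    intro t ht
    exact (hφ t ht).div ((Real.hasDerivAt_cosh t).hasDerivWithinAt) (Real.cosh_pos t).ne'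
  have hρmono : MonotoneOn ρ s := mono_aux hρ (fun t ht =>
    div_nonneg (hψnonneg t ht) (sq_nonneg _))
  have hρ0 : ρ 0 = 0 := by simp [hρdef, hφdef, Real.cosh_zero]
  have hρy : 0 ≤ ρ y := by
    have := hρmono ⟨le_refl 0, hy⟩ ⟨hy, le_refl y⟩ hy
    rwa [hρ0] at this
  have : 0 ≤ φ y := by
    have := mul_nonneg hρy (Real.cosh_pos y).le
    rwa [hρdef, div_mul_cancel₀ _ (Real.cosh_pos y).ne'] at this
  simpa [hφdef, sub_nonneg] using this
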